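/- Let h : (0,t₀] → (0,∞) be increasing and satisfy the scaling h(R)/h(r) ≥ C₃ (R/r)^{1/α₂} for 0 < r ≤ R ≤ t₀ with α₂ < 2. Let a ∈ (1,2] and b with 1/a + 1/b = 1 (so b ≥ 2 > α₂). Let Ψ be increasing with inverse-type relation h(t) = 1/Ψ⁻(1/t). Then there exists C = C(a) such that ∫₀^t (min(r/h(t−s), 1))^b ds ≤ C / Ψ(1/r) for all t ≤ t₀ and r > 0. -/

import Mathlib

open MeasureTheory

set_option maxHeartbeats 1000000 in
theorem stmt7 (t₀ : ℝ) (ht₀ : 0 < t₀) (h Ψ Ψinv : ℝ → ℝ)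
    (hhpos : ∀ t : ℝ, 0 < t → t ≤ t₀ → 0 < h t)
    (hhmono : ∀ s t : ℝ, 0 < s → s ≤ t → t ≤ t₀ → h s ≤ h t)
    (C₃ α₂ : ℝ) (hC₃ : 0 < C₃) (hα₂ : 0 < α₂) (hα₂2 : α₂ < 2)
    (hscal : ∀ r R : ℝ, 0 < r → r ≤ R → R ≤ t₀ →
      C₃ * (R / r) ^ (1 / α₂) ≤ h R / h r)
    (hΨpos : ∀ u : ℝ, 0 < u → 0 < Ψ u)
    (hΨmono : ∀ u v : ℝ, 0 < u → u ≤ v → Ψ u ≤ Ψ v)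
    (hΨinvpos : ∀ s : ℝ, 0 < s → 0 < Ψinv s)
    (hΨΨinv : ∀ s : ℝ, 0 < s → Ψ (Ψinv s) = s)
    (hΨinvΨ : ∀ s : ℝ, 0 < s → s ≤ Ψinv (Ψ s))
    (hhdef : ∀ t : ℝ, 0 < t → h t = 1 / Ψinv (1 / t))
    (a b : ℝ) (ha : 1 < a) (ha2 : a ≤ 2) (hb : 1 / a + 1 / b = 1) :
    ∃ C > 0, ∀ t r : ℝ, 0 < t → t ≤ t₀ → 0 < r →
      (∫ s in Set.Ioo (0:ℝ) t, (min (r / h (t - s)) 1) ^ b) ≤ C / Ψ (1 / r) := by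
  -- basic facts about b
  have ha0 : (0:ℝ) < a := by linarith
  have h1a1 : 1 / a < 1 := (div_lt_one ha0).mpr ha
  have h1a2 : 1 / 2 ≤ 1 / a := by
    rw [div_le_div_iff₀ (by norm_num) ha0]; linarith
  have h1b0 : 0 < 1 / b := by linarith
  have hbpos : 0 < b := one_div_pos.mp h1b0
  have hb2 : 2 ≤ b := by
    have h1b : 1 / b ≤ 1 / 2 := by linarith
    rw [div_le_div_iff₀ hbpos (by norm_num)] at h1b; linarith
  set p : ℝ := b / α₂ with hp_def
  have hp1 : 1 < p := (one_lt_div hα₂).mpr (by linarith)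
  have hppos : 0 < p := by linarith
  set K : ℝ := C₃⁻¹ ^ b with hK_def
  have hKpos : 0 < K := Real.rpow_pos_of_pos (inv_pos.mpr hC₃) b
  have hp0 : 0 < p - 1 := by linarith
  refine ⟨2 + 2 * K / (p - 1), by positivity, ?_⟩
  intro t r ht htt₀ hr
  set δ : ℝ := 1 / Ψ (1 / r) with hδ_def
  have hΨr : 0 < Ψ (1 / r) := hΨpos _ (by positivity)
  have hδ : 0 < δ := by positivity
  have hCδ : (2 + 2 * K / (p - 1)) / Ψ (1 / r) = (2 + 2 * K / (p - 1)) * δ :=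
    div_eq_mul_one_div _ _
  rw [hCδ]
  -- change of variables: the integral equals ∫ g over Ioo 0 t where g u = min (r / h u) 1 ^ b
  set g : ℝ → ℝ := fun u => min (r / h u) 1 ^ b with hg_def
  have hcv : (∫ s in Set.Ioo (0:ℝ) t, (min (r / h (t - s)) 1) ^ b)
      = ∫ u in Set.Ioo (0:ℝ) t, g u := by
    have h1 : (∫ s in Set.Ioo (0:ℝ) t, (min (r / h (t - s)) 1) ^ b)
        = ∫ s in (0:ℝ)..t, g (t - s) := by
      rw [intervalIntegral.integral_of_le ht.le, integral_Ioc_eq_integral_Ioo]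
    have h2 : (∫ s in (0:ℝ)..t, g (t - s)) = ∫ u in (0:ℝ)..t, g u := by
      rw [intervalIntegral.integral_comp_sub_left g t]
      norm_num
    rw [h1, h2, intervalIntegral.integral_of_le ht.le, integral_Ioc_eq_integral_Ioo]
  rw [hcv]
  -- pointwise bounds on g over (0, t₀]
  have hgle1 : ∀ u : ℝ, 0 < u → u ≤ t₀ → 0 ≤ g u ∧ g u ≤ 1 := by
    intro u hu hut₀
    have hhu : 0 < h u := hhpos u hu hut₀
    have hmin0 : 0 ≤ min (r / h u) 1 := le_min (by positivity) one_pos.le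
    exact ⟨Real.rpow_nonneg hmin0 b,
      Real.rpow_le_one hmin0 (min_le_right _ _) hbpos.le⟩
  -- measurability of g on Ioo 0 t
  have hhaem : AEMeasurable h (volume.restrict (Set.Ioo 0 t)) := by
    have hmono : MonotoneOn h (Set.Ioc 0 t₀) := by
      intro x hx y hy hxy
      exact hhmono x y hx.1 hxy hy.2
    have := aemeasurable_restrict_of_monotoneOn (μ := volume) measurableSet_Ioc hmono
    exact this.mono_measure (Measure.restrict_mono
      (fun x hx => Set.mem_Ioc.mpr ⟨(Set.mem_Ioo.mp hx).1,
        le_trans (Set.mem_Ioo.mp hx).2.le htt₀⟩) le_rfl)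
  have hgaem : AEMeasurable g (volume.restrict (Set.Ioo 0 t)) := by
    have hmin : AEMeasurable (fun u => min (r / h u) 1)
        (volume.restrict (Set.Ioo 0 t)) :=
      (aemeasurable_const.div hhaem).min aemeasurable_const
    exact (Real.continuous_rpow_const hbpos.le).measurable.comp_aemeasurable hmin
  -- integrability of g on Ioo 0 t
  have hgint : IntegrableOn g (Set.Ioo 0 t) := by
    refine Integrable.mono' (g := fun _ => (1:ℝ))
      ((integrableOn_const_iff (C := (1:ℝ)) (by simp)).mpr (Or.inr measure_Ioo_lt_top))
      hgaem.aestronglyMeasurable ?_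
    rw [ae_restrict_iff' measurableSet_Ioo]
    filter_upwards with u hu
    have := hgle1 u hu.1 (le_trans hu.2.le htt₀)
    rw [Real.norm_eq_abs, abs_of_nonneg this.1]
    exact this.2
  -- norm bound on pieces: integral over a subinterval of (0, t₀] is ≤ its length
  have hpiece : ∀ s : Set ℝ, s ⊆ Set.Ioo 0 t → MeasurableSet s →
      (∫ u in s, g u) ≤ (volume s).toReal := by
    intro s hs hsm
    have hsub : volume.restrict s ≤ volume.restrict (Set.Ioo 0 t) :=
      Measure.restrict_mono hs le_rfl
    have hfin : volume s < ⊤ :=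
      lt_of_le_of_lt (measure_mono hs) measure_Ioo_lt_top
    have := norm_setIntegral_le_of_norm_le_const (μ := volume) (s := s)
      (f := g) (C := 1) hfin ?_
    · calc (∫ u in s, g u) ≤ ‖∫ u in s, g u‖ := le_abs_self _
        _ ≤ 1 * (volume s).toReal := this
        _ = (volume s).toReal := one_mul _
    · intro x hx
      have hx' := hs hx
      have := hgle1 x hx'.1 (le_trans hx'.2.le htt₀)
      rw [Real.norm_eq_abs, abs_of_nonneg this.1]
      exact this.2
  by_cases hcase : t ≤ 2 * δ
  · -- small t: bound by length of interval
    have h1 := hpiece (Set.Ioo 0 t) (subset_refl _) measurableSet_Ioo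
    have h2 : (volume (Set.Ioo 0 t)).toReal = t := by
      rw [Real.volume_Ioo, ENNReal.toReal_ofReal (by linarith : (0:ℝ) ≤ t - 0)]; ring
    rw [h2] at h1
    have : (2:ℝ) * δ ≤ (2 + 2 * K / (p - 1)) * δ := by
      have h3 : 0 < 2 * K / (p - 1) := div_pos (by positivity) hp0
      nlinarith
    linarith
  · push_neg at hcase
    have h2δt₀ : 2 * δ ≤ t₀ := by linarith
    -- r ≤ h (2δ)
    have hrh2δ : r ≤ h (2 * δ) := by
      have h2δpos : 0 < 2 * δ := by positivity
      have hΨinv2δ : 0 < Ψinv (1 / (2 * δ)) := hΨinvpos _ (by positivity)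
      rw [hhdef _ h2δpos]
      rw [le_div_iff₀ hΨinv2δ, ← le_div_iff₀' hr]
      -- goal : Ψinv (1 / (2*δ)) ≤ 1 / r
      by_contra hcon
      push_neg at hcon
      have h1 : Ψ (1 / r) ≤ Ψ (Ψinv (1 / (2 * δ))) :=
        hΨmono _ _ (by positivity) hcon.le
      rw [hΨΨinv _ (by positivity)] at h1
      have h2 : Ψ (1 / r) = 1 / δ := by
        rw [hδ_def, one_div_one_div]
      rw [h2] at h1
      have : 1 / (2 * δ) < 1 / δ := by
        rw [div_lt_div_iff₀ (by positivity) hδ]; nlinarith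
      linarith
    -- pointwise bound on [2δ, t₀]
    have hM : ∀ u : ℝ, 2 * δ ≤ u → u ≤ t₀ → g u ≤ K * (2 * δ / u) ^ p := by
      intro u h2δu hut₀
      have hupos : 0 < u := lt_of_lt_of_le (by positivity) h2δu
      have hhu : 0 < h u := hhpos u hupos hut₀
      have hh2δ : 0 < h (2 * δ) := hhpos _ (by positivity) h2δt₀
      have hscale := hscal (2 * δ) u (by positivity) h2δu hut₀
      have hCpos : 0 < C₃ * (u / (2 * δ)) ^ (1 / α₂) := by
        have : (0:ℝ) < (u / (2 * δ)) ^ (1 / α₂) :=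
          Real.rpow_pos_of_pos (by positivity) _
        positivity
      have hmin0 : 0 ≤ min (r / h u) 1 := le_min (by positivity) one_pos.le
      have hkey : min (r / h u) 1 ≤ C₃⁻¹ * (2 * δ / u) ^ (1 / α₂) := by
        have h1 : min (r / h u) 1 ≤ r / h u := min_le_left _ _
        have h2 : r / h u ≤ h (2 * δ) / h u := (div_le_div_iff_of_pos_right hhu).mpr hrh2δ
        have h3 : h (2 * δ) / h u ≤ (C₃ * (u / (2 * δ)) ^ (1 / α₂))⁻¹ := by
          have := inv_anti₀ hCpos hscale
          rwa [inv_div] at this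
        calc min (r / h u) 1 ≤ r / h u := h1
          _ ≤ h (2 * δ) / h u := h2
          _ ≤ (C₃ * (u / (2 * δ)) ^ (1 / α₂))⁻¹ := h3
          _ = C₃⁻¹ * (2 * δ / u) ^ (1 / α₂) := by
            rw [mul_inv, ← Real.inv_rpow (by positivity), inv_div]
      calc g u = min (r / h u) 1 ^ b := rfl
        _ ≤ (C₃⁻¹ * (2 * δ / u) ^ (1 / α₂)) ^ b :=
            Real.rpow_le_rpow hmin0 hkey hbpos.le
        _ = K * (2 * δ / u) ^ p := by
            rw [Real.mul_rpow (by positivity) (Real.rpow_nonneg (by positivity) _),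
              ← Real.rpow_mul (by positivity : (0:ℝ) ≤ 2 * δ / u),
              one_div_mul_eq_div]
    -- split the integral
    have hsplit : Set.Ioo (0:ℝ) t = Set.Ioc 0 (2 * δ) ∪ Set.Ioo (2 * δ) t :=
      (Set.Ioc_union_Ioo_eq_Ioo (by positivity) hcase).symm
    have hdisj : Disjoint (Set.Ioc (0:ℝ) (2 * δ)) (Set.Ioo (2 * δ) t) := by
      rw [Set.disjoint_left]
      rintro x ⟨_, hx2⟩ ⟨hx3, _⟩
      linarith
    have hsub1 : Set.Ioc (0:ℝ) (2 * δ) ⊆ Set.Ioo 0 t := fun x hx =>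
      ⟨hx.1, lt_of_le_of_lt hx.2 hcase⟩
    have hsub2 : Set.Ioo (2 * δ) t ⊆ Set.Ioo (0:ℝ) t := fun x hx =>
      ⟨lt_trans (by positivity) hx.1, hx.2⟩
    have hI : (∫ u in Set.Ioo (0:ℝ) t, g u)
        = (∫ u in Set.Ioc (0:ℝ) (2 * δ), g u) + ∫ u in Set.Ioo (2 * δ) t, g u := by
      rw [hsplit]
      exact setIntegral_union hdisj measurableSet_Ioo
        (hgint.mono_set hsub1) (hgint.mono_set hsub2)
    -- first piece
    have hI1 : (∫ u in Set.Ioc (0:ℝ) (2 * δ), g u) ≤ 2 * δ := by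
      have h1 : (∫ u in Set.Ioc (0:ℝ) (2 * δ), g u)
          = ∫ u in Set.Ioo (0:ℝ) (2 * δ), g u := integral_Ioc_eq_integral_Ioo
      have h2 := hpiece (Set.Ioo 0 (2 * δ))
        (fun x hx => ⟨hx.1, lt_trans hx.2 hcase⟩) measurableSet_Ioo
      rw [Real.volume_Ioo, ENNReal.toReal_ofReal (by linarith : (0:ℝ) ≤ 2 * δ - 0)] at h2
      rw [h1]; linarith
    -- second piece
    have hI2 : (∫ u in Set.Ioo (2 * δ) t, g u) ≤ 2 * K / (p - 1) * δ := by
      set M : ℝ → ℝ := fun u => K * (2 * δ / u) ^ p with hM_def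
      have hMcont : ContinuousOn M (Set.Icc (2 * δ) t) := by
        apply ContinuousOn.mul continuousOn_const
        apply ContinuousOn.rpow_const
        · exact continuousOn_const.div continuousOn_id fun x hx => by
            have : 0 < x := lt_of_lt_of_le (by positivity) hx.1
            exact this.ne'
        · intro x hx; exact Or.inr hppos.le
      have hMint : IntegrableOn M (Set.Ioo (2 * δ) t) :=
        (hMcont.integrableOn_Icc).mono_set Set.Ioo_subset_Icc_self
      have hle : (∫ u in Set.Ioo (2 * δ) t, g u) ≤ ∫ u in Set.Ioo (2 * δ) t, M u := by
        apply setIntegral_mono_on (hgint.mono_set hsub2) hMint measurableSet_Ioo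
        intro x hx
        exact hM x hx.1.le (le_trans hx.2.le htt₀)
      have hval : (∫ u in Set.Ioo (2 * δ) t, M u) ≤ 2 * K / (p - 1) * δ := by
        have heq : (∫ u in Set.Ioo (2 * δ) t, M u) = ∫ u in (2 * δ)..t, M u := by
          rw [intervalIntegral.integral_of_le hcase.le, integral_Ioc_eq_integral_Ioo]
        have hMval : ∀ u ∈ Set.uIcc (2 * δ) t, M u = K * (2 * δ) ^ p * u ^ (-p) := by
          intro u hu
          rw [Set.uIcc_of_le hcase.le] at hu
          have hupos : 0 < u := lt_of_lt_of_le (by positivity) hu.1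
          simp only [hM_def]
          rw [Real.div_rpow (by positivity) hupos.le, Real.rpow_neg hupos.le,
            div_eq_mul_inv, mul_assoc]
        have hzero : (0:ℝ) ∉ Set.uIcc (2 * δ) t := by
          rw [Set.uIcc_of_le hcase.le]
          rintro ⟨h1, _⟩
          have : (0:ℝ) < 2 * δ := by positivity
          linarith
        have hrint : (∫ u in (2 * δ)..t, u ^ (-p))
            = (t ^ (-p + 1) - (2 * δ) ^ (-p + 1)) / (-p + 1) :=
          integral_rpow (Or.inr ⟨by intro hc; rw [neg_eq_iff_eq_neg] at hc; linarith [hc], hzero⟩)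
        have heq2 : (∫ u in (2 * δ)..t, M u)
            = K * (2 * δ) ^ p * ((t ^ (-p + 1) - (2 * δ) ^ (-p + 1)) / (-p + 1)) := by
          rw [intervalIntegral.integral_congr hMval, intervalIntegral.integral_const_mul,
            hrint]
        rw [heq, heq2]
        have ht1p : (0:ℝ) ≤ t ^ (-p + 1) := Real.rpow_nonneg ht.le _
        have h2δ1p : (0:ℝ) < (2 * δ) ^ (-p + 1) := Real.rpow_pos_of_pos (by positivity) _
        have hbound : (t ^ (-p + 1) - (2 * δ) ^ (-p + 1)) / (-p + 1)
            ≤ (2 * δ) ^ (-p + 1) / (p - 1) := by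
          have hne1 : -p + 1 ≠ 0 := by intro hc; linarith
          have hne2 : p - 1 ≠ 0 := by intro hc; linarith
          have heqq : (t ^ (-p + 1) - (2 * δ) ^ (-p + 1)) / (-p + 1)
              = ((2 * δ) ^ (-p + 1) - t ^ (-p + 1)) / (p - 1) := by
            field_simp
            ring
          rw [heqq]
          exact div_le_div_of_nonneg_right (by linarith) hp0.le
        have h2δp : (0:ℝ) < (2 * δ) ^ p := Real.rpow_pos_of_pos (by positivity) _
        calc K * (2 * δ) ^ p * ((t ^ (-p + 1) - (2 * δ) ^ (-p + 1)) / (-p + 1))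
            ≤ K * (2 * δ) ^ p * ((2 * δ) ^ (-p + 1) / (p - 1)) := by
              apply mul_le_mul_of_nonneg_left hbound (by positivity)
          _ = 2 * K / (p - 1) * δ := by
              rw [mul_assoc, ← mul_div_assoc, ← Real.rpow_add (by positivity)]
              have : p + (-p + 1) = 1 := by ring
              rw [this, Real.rpow_one]
              field_simp
      linarith
    rw [hI]
    have : (2:ℝ) * δ + 2 * K / (p - 1) * δ = (2 + 2 * K / (p - 1)) * δ := by ring
    linarith
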